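/- If P is a finite connected d-complete poset, then P has a unique maximal element. -/

import Mathlib

/-- The order relation of the double-tailed diamond `d_k(1)` on `Fin (2*k-2)`. -/
def dtdLE (k : ℕ) (i j : Fin (2 * k - 2)) : Prop :=
  i = j ∨ (i.val < j.val ∧ ¬(i.val = k - 2 ∧ j.val = k - 1))

/-- The order relation of `d_k(1)` with its maximum removed, on `Fin (2*k-3)`. -/
def dtdmLE (k : ℕ) (i j : Fin (2 * k - 3)) : Prop :=
  i = j ∨ (i.val < j.val ∧ ¬(i.val = k - 2 ∧ j.val = k - 1))

/-- `[w,v]` is a `d_k`-interval: the interval is order-isomorphic to `d_k(1)`. -/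
def IsDkInterval {P : Type*} [PartialOrder P] (k : ℕ) (w v : P) : Prop :=
  Nonempty (Subrel ((· ≤ ·) : P → P → Prop) (Set.Icc w v) ≃r dtdLE k)

/-- `I` is a `d_k^-`-interval: for `k = 3` a triple `{w, x, y}` with `w` covered
by both `x` and `y`; for `k ≥ 4` an interval order-isomorphic to `d_k(1)` minus
its maximum. -/
def IsDkmInterval {P : Type*} [PartialOrder P] (k : ℕ) (I : Set P) : Prop :=
  if k = 3 then ∃ w x y : P, x ≠ y ∧ w ⋖ x ∧ w ⋖ y ∧ I = {w, x, y}
  else ∃ w v : P, I = Set.Icc w v ∧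
    Nonempty (Subrel ((· ≤ ·) : P → P → Prop) I ≃r dtdmLE k)

/-- `P` is `d`-complete: conditions (D1), (D2), (D3) hold for every `k ≥ 3`. -/
def IsDComplete (P : Type*) [PartialOrder P] : Prop :=
  ∀ k, 3 ≤ k →
    -- (D1) every `d_k^-`-interval extends by an element covering its maximal
    -- elements to a `d_k`-interval
    (∀ I : Set P, IsDkmInterval k I → ∃ v : P,
        (∀ m ∈ I, (∀ x ∈ I, ¬ m < x) → m ⋖ v) ∧
        Nonempty (Subrel ((· ≤ ·) : P → P → Prop) ((I ∪ {v} : Set P)) ≃r dtdLE k)) ∧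
    -- (D2) the top of a `d_k`-interval covers only elements of that interval
    (∀ w v : P, IsDkInterval k w v → ∀ u : P, u ⋖ v → u ∈ Set.Icc w v) ∧
    -- (D3) no two `d_k^-`-intervals differ only in their minimal elements
    (∀ I J : Set P, IsDkmInterval k I → IsDkmInterval k J →
        {x ∈ I | ∃ y ∈ I, y < x} = {x ∈ J | ∃ y ∈ J, y < x} → I = J)

/-- Key lemma: in a finite `d`-complete poset, two elements with a common lower
bound have a common upper bound. -/
private lemma common_ub {P : Type*} [PartialOrder P] [Finite P] (hd : IsDComplete P) :
    ∀ w x y : P, w ≤ x → w ≤ y → ∃ z, x ≤ z ∧ y ≤ z := by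
  have wf : WellFounded ((· > ·) : P → P → Prop) := wellFounded_gt
  intro w
  induction w using wf.induction with
  | _ w ih =>
    intro x y hwx hwy
    rcases eq_or_lt_of_le hwx with rfl | hwx
    · exact ⟨y, hwy, le_rfl⟩
    rcases eq_or_lt_of_le hwy with rfl | hwy
    · exact ⟨x, le_rfl, hwx.le⟩
    obtain ⟨x', hx'c, hx'x⟩ := hwx.exists_covby_le
    obtain ⟨y', hy'c, hy'y⟩ := hwy.exists_covby_le
    by_cases hxy : x' = y'
    · subst hxy
      exact ih x' hx'c.lt x y hx'x hy'y
    · have hI : IsDkmInterval 3 ({w, x', y'} : Set P) := by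
        unfold IsDkmInterval
        rw [if_pos rfl]
        exact ⟨w, x', y', hxy, hx'c, hy'c, rfl⟩
      obtain ⟨v, hv, -⟩ := (hd 3 le_rfl).1 {w, x', y'} hI
      have hx'v : x' ≤ v := by
        refine (hv x' (by simp) ?_).le
        rintro t ht hlt
        rcases ht with rfl | rfl | rfl
        · exact absurd (hx'c.lt.trans hlt) (lt_irrefl _)
        · exact lt_irrefl _ hlt
        · exact hy'c.2 hx'c.lt hlt
      have hy'v : y' ≤ v := by
        refine (hv y' (by simp) ?_).le
        rintro t ht hlt
        rcases ht with rfl | rfl | rfl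
        · exact absurd (hy'c.lt.trans hlt) (lt_irrefl _)
        · exact hx'c.2 hy'c.lt hlt
        · exact lt_irrefl _ hlt
      obtain ⟨z1, hxz1, hvz1⟩ := ih x' hx'c.lt x v hx'x hx'v
      obtain ⟨z, hz1z, hyz⟩ := ih y' hy'c.lt z1 y (hy'v.trans hvz1) hy'y
      exact ⟨z, hxz1.trans hz1z, hyz⟩

private lemma zigzag_ub {P : Type*} [PartialOrder P] [Finite P] (hd : IsDComplete P)
    {x y : P} (h : Relation.ReflTransGen (fun a b => a ≤ b ∨ b ≤ a) x y) :
    ∃ z, x ≤ z ∧ y ≤ z := by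
  induction h with
  | refl => exact ⟨x, le_rfl, le_rfl⟩
  | tail _ hbc ih =>
    obtain ⟨z, hxz, hbz⟩ := ih
    rcases hbc with hbc | hcb
    · obtain ⟨u, hzu, hcu⟩ := common_ub hd _ z _ hbz hbc
      exact ⟨u, hxz.trans hzu, hcu⟩
    · exact ⟨z, hxz, hcb.trans hbz⟩

private lemma exists_isMax {P : Type*} [PartialOrder P] [Finite P] (a : P) :
    ∃ m : P, a ≤ m ∧ IsMax m := by
  have wf : WellFounded ((· > ·) : P → P → Prop) := wellFounded_gt
  induction a using wf.induction with
  | _ a ih =>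
    by_cases ha : IsMax a
    · exact ⟨a, le_rfl, ha⟩
    · obtain ⟨b, hb⟩ := not_isMax_iff.1 ha
      obtain ⟨m, hbm, hm⟩ := ih b hb
      exact ⟨m, hb.le.trans hbm, hm⟩

/-- A finite connected `d`-complete poset has a unique maximal element.
Connectedness means any two elements are joined by a chain of comparabilities
(the Hasse diagram is connected). -/
theorem stmt_3 {P : Type*} [PartialOrder P] [Fintype P] [Nonempty P]
    (hconn : ∀ x y : P, Relation.ReflTransGen (fun a b => a ≤ b ∨ b ≤ a) x y)
    (hd : IsDComplete P) :
    ∃! m : P, IsMax m := by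
  obtain ⟨m, -, hm⟩ := exists_isMax (Classical.arbitrary P)
  refine ⟨m, hm, fun m' hm' => ?_⟩
  obtain ⟨z, hm'z, hmz⟩ := zigzag_ub hd (hconn m' m)
  have hzm : z ≤ m := hm hmz
  have hzm' : z ≤ m' := hm' hm'z
  exact le_antisymm (hm'z.trans hzm) (hmz.trans hzm')
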